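/- Well-posedness of the discrete curl–divergence problem (Lemma 2.7): assume (SgnCancel): for every primary cell i and every vertex ν, the sum of t_{e,ν}·n_{e,i} over all edges e incident to both i and ν equals 0; (Euler): card C + card V = card E + 1; (KerSkew): the only dual scalar field ψ with ∇̃⊥_h ψ = 0 is ψ = 0; (KerGrad): every primary scalar field φ with ∇_h φ = 0 is constant; and (TwoCells): every edge is incident to exactly two distinct primary cells with opposite signs n_{e,i}. Then for every pair (ω, δ) consisting of a dual scalar field ω and a primary scalar field δ with Σ_{i∈C} A_i δ_i = 0, there exists a unique discrete vector field u ∈ ℝ^E such that ∇̃_h×u = ω and ∇_h·u = δ. -/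

import Mathlib

open Finset

noncomputable section

/-- A combinatorial staggered mesh: primary cells `C`, dual cells (vertices) `V`,
edges `E`, with areas, edge lengths, incidence relations and signs. -/
structure StagMesh (C V E : Type) [Fintype C] [Fintype V] [Fintype E]
    [DecidableEq C] [DecidableEq V] where
  /-- primary cell areas -/
  Ac : C → ℝ
  /-- dual cell areas -/
  Av : V → ℝ
  /-- primary edge lengths -/
  l : E → ℝ
  /-- dual edge lengths -/
  d : E → ℝ
  Ac_pos : ∀ i, 0 < Ac i
  Av_pos : ∀ ν, 0 < Av ν
  l_pos : ∀ e, 0 < l e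
  d_pos : ∀ e, 0 < d e
  /-- primary cells incident to an edge -/
  EC : E → Finset C
  /-- vertices (dual cells) incident to an edge -/
  EV : E → Finset V
  /-- sign `n_{e,i}` attached to an incident edge–cell pair -/
  n : E → C → ℝ
  /-- sign `t_{e,ν}` attached to an incident edge–vertex pair -/
  t : E → V → ℝ
  n_sign : ∀ e i, i ∈ EC e → n e i = 1 ∨ n e i = -1
  t_sign : ∀ e ν, ν ∈ EV e → t e ν = 1 ∨ t e ν = -1

namespace StagMesh

variable {C V E : Type} [Fintype C] [Fintype V] [Fintype E]
  [DecidableEq C] [DecidableEq V]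

/-- diamond area `A_e = (1/2) l_e d_e` -/
def Ae (M : StagMesh C V E) (e : E) : ℝ := (1 / 2) * M.l e * M.d e

/-- discrete gradient `[∇_h φ]_e = -(1/d_e) Σ_{i ~ e} n_{e,i} φ_i` -/
def grad (M : StagMesh C V E) (φ : C → ℝ) : E → ℝ :=
  fun e => -(1 / M.d e) * ∑ i ∈ M.EC e, M.n e i * φ i

/-- discrete skew gradient `[∇̃⊥_h ψ]_e = (1/l_e) Σ_{ν ~ e} t_{e,ν} ψ_ν` -/
def skewGrad (M : StagMesh C V E) (ψ : V → ℝ) : E → ℝ :=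
  fun e => (1 / M.l e) * ∑ ν ∈ M.EV e, M.t e ν * ψ ν

/-- discrete divergence `[∇_h·u]_i = (1/A_i) Σ_{e ~ i} l_e n_{e,i} u_e` -/
def dvg (M : StagMesh C V E) (u : E → ℝ) : C → ℝ :=
  fun i => (1 / M.Ac i) * ∑ e ∈ univ.filter (fun e => i ∈ M.EC e), M.l e * M.n e i * u e

/-- discrete curl `[∇̃_h×u]_ν = -(1/A_ν) Σ_{e ~ ν} d_e t_{e,ν} u_e` -/
def curl (M : StagMesh C V E) (u : E → ℝ) : V → ℝ :=
  fun ν => -(1 / M.Av ν) * ∑ e ∈ univ.filter (fun e => ν ∈ M.EV e), M.d e * M.t e ν * u e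

/-- area-weighted inner product on primary scalar fields -/
def innerC (M : StagMesh C V E) (φ φ' : C → ℝ) : ℝ := ∑ i, M.Ac i * φ i * φ' i

/-- area-weighted inner product on dual scalar fields -/
def innerV (M : StagMesh C V E) (ψ ψ' : V → ℝ) : ℝ := ∑ ν, M.Av ν * ψ ν * ψ' ν

/-- diamond-weighted inner product on discrete vector fields -/
def innerE (M : StagMesh C V E) (u u' : E → ℝ) : ℝ := ∑ e, M.Ae e * u e * u' e

/-- weighted `L²` norm on primary scalar fields -/
noncomputable def normC (M : StagMesh C V E) (φ : C → ℝ) : ℝ := Real.sqrt (M.innerC φ φ)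

/-- weighted `L²` norm on dual scalar fields -/
noncomputable def normV (M : StagMesh C V E) (ψ : V → ℝ) : ℝ := Real.sqrt (M.innerV ψ ψ)

/-- weighted `L²` norm on discrete vector fields -/
noncomputable def normE (M : StagMesh C V E) (u : E → ℝ) : ℝ := Real.sqrt (M.innerE u u)

/-- sign-cancellation condition: for every primary cell `i` and vertex `ν`,
`Σ_{e ~ i, e ~ ν} t_{e,ν} n_{e,i} = 0`. -/
def SgnCancel (M : StagMesh C V E) : Prop :=
  ∀ (i : C) (ν : V),
    ∑ e ∈ univ.filter (fun e => i ∈ M.EC e ∧ ν ∈ M.EV e), M.t e ν * M.n e i = 0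

end StagMesh

open StagMesh

namespace CurlDivAux

variable {C V E : Type} [Fintype C] [Fintype V] [Fintype E]
  [DecidableEq C] [DecidableEq V]

lemma sum_swapC (M : StagMesh C V E) (s : Finset E) (f : E → C → ℝ) :
    ∑ e ∈ s, ∑ i ∈ M.EC e, f e i = ∑ i, ∑ e ∈ s.filter (fun e => i ∈ M.EC e), f e i := by
  simp only [Finset.sum_filter]
  rw [Finset.sum_comm]
  exact Finset.sum_congr rfl fun e _ => by rw [Finset.sum_ite_mem, Finset.univ_inter]

lemma sum_swapV (M : StagMesh C V E) (s : Finset E) (f : E → V → ℝ) :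
    ∑ e ∈ s, ∑ ν ∈ M.EV e, f e ν = ∑ ν, ∑ e ∈ s.filter (fun e => ν ∈ M.EV e), f e ν := by
  simp only [Finset.sum_filter]
  rw [Finset.sum_comm]
  exact Finset.sum_congr rfl fun e _ => by rw [Finset.sum_ite_mem, Finset.univ_inter]

lemma mul_sum_fac {α : Type*} (s : Finset α) (a c : ℝ) (f : α → ℝ) :
    c * (a * ∑ x ∈ s, f x) = a * ∑ x ∈ s, c * f x := by
  have h : c * (a * ∑ x ∈ s, f x) = a * (c * ∑ x ∈ s, f x) := by ring
  rw [h, Finset.mul_sum]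

/-- gradient as a linear map -/
def gradL (M : StagMesh C V E) : (C → ℝ) →ₗ[ℝ] (E → ℝ) where
  toFun := M.grad
  map_add' φ φ' := by
    funext e
    simp only [StagMesh.grad, Pi.add_apply, mul_add, Finset.sum_add_distrib]
  map_smul' c φ := by
    funext e
    simp only [StagMesh.grad, Pi.smul_apply, smul_eq_mul, RingHom.id_apply]
    rw [mul_sum_fac]
    congr 1
    exact Finset.sum_congr rfl fun i _ => by ring

/-- skew gradient as a linear map -/
def skewL (M : StagMesh C V E) : (V → ℝ) →ₗ[ℝ] (E → ℝ) where
  toFun := M.skewGrad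
  map_add' ψ ψ' := by
    funext e
    simp only [StagMesh.skewGrad, Pi.add_apply, mul_add, Finset.sum_add_distrib]
  map_smul' c ψ := by
    funext e
    simp only [StagMesh.skewGrad, Pi.smul_apply, smul_eq_mul, RingHom.id_apply]
    rw [mul_sum_fac]
    congr 1
    exact Finset.sum_congr rfl fun ν _ => by ring

/-- curl as a linear map -/
def curlL (M : StagMesh C V E) : (E → ℝ) →ₗ[ℝ] (V → ℝ) where
  toFun := M.curl
  map_add' u u' := by
    funext ν
    simp only [StagMesh.curl, Pi.add_apply, mul_add, Finset.sum_add_distrib]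
  map_smul' c u := by
    funext ν
    simp only [StagMesh.curl, Pi.smul_apply, smul_eq_mul, RingHom.id_apply]
    rw [mul_sum_fac]
    congr 1
    exact Finset.sum_congr rfl fun e _ => by ring

/-- divergence as a linear map -/
def dvgL (M : StagMesh C V E) : (E → ℝ) →ₗ[ℝ] (C → ℝ) where
  toFun := M.dvg
  map_add' u u' := by
    funext i
    simp only [StagMesh.dvg, Pi.add_apply, mul_add, Finset.sum_add_distrib]
  map_smul' c u := by
    funext i
    simp only [StagMesh.dvg, Pi.smul_apply, smul_eq_mul, RingHom.id_apply]
    rw [mul_sum_fac]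
    congr 1
    exact Finset.sum_congr rfl fun e _ => by ring

/-- adjoint identity for the gradient -/
lemma innerE_grad (M : StagMesh C V E) (φ : C → ℝ) (u : E → ℝ) :
    M.innerE (M.grad φ) u = -(1/2) * M.innerC φ (M.dvg u) := by
  unfold StagMesh.innerE StagMesh.grad StagMesh.innerC StagMesh.dvg StagMesh.Ae
  have L : ∑ e, (1 / 2 * M.l e * M.d e) * (-(1 / M.d e) * ∑ i ∈ M.EC e, M.n e i * φ i) * u e
      = ∑ e, ∑ i ∈ M.EC e, (-(1/2) * (M.l e * M.n e i * u e) * φ i) := by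
    refine Finset.sum_congr rfl fun e _ => ?_
    have hd := (M.d_pos e).ne'
    have h1 : (1 / 2 * M.l e * M.d e) * (-(1 / M.d e) * ∑ i ∈ M.EC e, M.n e i * φ i) * u e
        = (-(1/2) * M.l e * u e) * ∑ i ∈ M.EC e, M.n e i * φ i := by
      field_simp
    rw [h1, Finset.mul_sum]
    exact Finset.sum_congr rfl fun i _ => by ring
  rw [L, sum_swapC M, Finset.mul_sum]
  refine Finset.sum_congr rfl fun i _ => ?_
  have hA := (M.Ac_pos i).ne'
  have h2 : -(1 / 2) * (M.Ac i * φ i * (1 / M.Ac i * ∑ e ∈ Finset.univ.filter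
        (fun e => i ∈ M.EC e), M.l e * M.n e i * u e))
      = (-(1/2) * φ i) * ∑ e ∈ Finset.univ.filter (fun e => i ∈ M.EC e),
        M.l e * M.n e i * u e := by
    field_simp
  rw [h2, Finset.mul_sum]
  exact Finset.sum_congr rfl fun e _ => by ring

/-- adjoint identity for the skew gradient -/
lemma innerE_skew (M : StagMesh C V E) (ψ : V → ℝ) (u : E → ℝ) :
    M.innerE (M.skewGrad ψ) u = -(1/2) * M.innerV ψ (M.curl u) := by
  unfold StagMesh.innerE StagMesh.skewGrad StagMesh.innerV StagMesh.curl StagMesh.Ae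
  have L : ∑ e, (1 / 2 * M.l e * M.d e) * ((1 / M.l e) * ∑ ν ∈ M.EV e, M.t e ν * ψ ν) * u e
      = ∑ e, ∑ ν ∈ M.EV e, ((1/2) * (M.d e * M.t e ν * u e) * ψ ν) := by
    refine Finset.sum_congr rfl fun e _ => ?_
    have hl := (M.l_pos e).ne'
    have h1 : (1 / 2 * M.l e * M.d e) * ((1 / M.l e) * ∑ ν ∈ M.EV e, M.t e ν * ψ ν) * u e
        = ((1/2) * M.d e * u e) * ∑ ν ∈ M.EV e, M.t e ν * ψ ν := by
      field_simp
    rw [h1, Finset.mul_sum]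
    exact Finset.sum_congr rfl fun ν _ => by ring
  rw [L, sum_swapV M, Finset.mul_sum]
  refine Finset.sum_congr rfl fun ν _ => ?_
  have hA := (M.Av_pos ν).ne'
  have h2 : -(1 / 2) * (M.Av ν * ψ ν * (-(1 / M.Av ν) * ∑ e ∈ Finset.univ.filter
        (fun e => ν ∈ M.EV e), M.d e * M.t e ν * u e))
      = ((1/2) * ψ ν) * ∑ e ∈ Finset.univ.filter (fun e => ν ∈ M.EV e),
        M.d e * M.t e ν * u e := by
    field_simp
  rw [h2, Finset.mul_sum]
  exact Finset.sum_congr rfl fun e _ => by ring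

/-- the curl of a gradient vanishes, by sign cancellation -/
lemma curl_grad (M : StagMesh C V E) (hsc : M.SgnCancel) (φ : C → ℝ) :
    M.curl (M.grad φ) = 0 := by
  funext ν
  unfold StagMesh.curl StagMesh.grad
  have L : ∑ e ∈ Finset.univ.filter (fun e => ν ∈ M.EV e),
        M.d e * M.t e ν * (-(1 / M.d e) * ∑ i ∈ M.EC e, M.n e i * φ i)
      = ∑ e ∈ Finset.univ.filter (fun e => ν ∈ M.EV e),
        ∑ i ∈ M.EC e, (-(M.t e ν * M.n e i) * φ i) := by
    refine Finset.sum_congr rfl fun e _ => ?_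
    have hd := (M.d_pos e).ne'
    have h1 : M.d e * M.t e ν * (-(1 / M.d e) * ∑ i ∈ M.EC e, M.n e i * φ i)
        = (-(M.t e ν)) * ∑ i ∈ M.EC e, M.n e i * φ i := by
      field_simp
    rw [h1, Finset.mul_sum]
    exact Finset.sum_congr rfl fun i _ => by ring
  rw [L, sum_swapC M]
  have Z : ∀ i : C, ∑ e ∈ (Finset.univ.filter (fun e => ν ∈ M.EV e)).filter
      (fun e => i ∈ M.EC e), (-(M.t e ν * M.n e i) * φ i) = 0 := by
    intro i
    rw [Finset.filter_filter]
    have hset : (Finset.univ.filter fun e => ν ∈ M.EV e ∧ i ∈ M.EC e)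
        = Finset.univ.filter (fun e => i ∈ M.EC e ∧ ν ∈ M.EV e) := by
      apply Finset.filter_congr
      intro e _
      exact and_comm
    rw [hset]
    have h3 : ∑ e ∈ Finset.univ.filter (fun e => i ∈ M.EC e ∧ ν ∈ M.EV e),
        (-(M.t e ν * M.n e i) * φ i)
        = (-(φ i)) * ∑ e ∈ Finset.univ.filter (fun e => i ∈ M.EC e ∧ ν ∈ M.EV e),
          M.t e ν * M.n e i := by
      rw [Finset.mul_sum]
      exact Finset.sum_congr rfl fun e _ => by ring
    rw [h3, hsc i ν, mul_zero]
  rw [Finset.sum_congr rfl fun i _ => Z i]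
  simp

/-- positive definiteness of the edge inner product -/
lemma innerE_self_eq_zero (M : StagMesh C V E) (u : E → ℝ) (h : M.innerE u u = 0) :
    u = 0 := by
  have hnn : ∀ e ∈ (Finset.univ : Finset E), 0 ≤ M.Ae e * u e * u e := by
    intro e _
    have hl := M.l_pos e
    have hd := M.d_pos e
    have hA : (0:ℝ) < M.Ae e := by unfold StagMesh.Ae; positivity
    rw [mul_assoc]
    exact mul_nonneg hA.le (mul_self_nonneg _)
  funext e
  have h0 := (Finset.sum_eq_zero_iff_of_nonneg hnn).mp h e (Finset.mem_univ e)
  have hl := M.l_pos e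
  have hd := M.d_pos e
  have hA : (0:ℝ) < M.Ae e := by unfold StagMesh.Ae; positivity
  rw [mul_assoc] at h0
  have h1 := (mul_eq_zero.mp h0).resolve_left hA.ne'
  simpa using mul_self_eq_zero.mp h1

/-- gradient of a constant vanishes, given the two-cell property -/
lemma grad_const (M : StagMesh C V E)
    (htwo : ∀ e : E, ∃ i j : C, i ≠ j ∧ M.EC e = {i, j} ∧ M.n e i = - M.n e j)
    (c : ℝ) : M.grad (fun _ => c) = 0 := by
  funext e
  obtain ⟨i, j, hij, hEC, hn⟩ := htwo e
  unfold StagMesh.grad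
  rw [hEC, Finset.sum_pair hij, hn]
  simp

/-- the area-weighted total divergence vanishes -/
lemma sum_dvg (M : StagMesh C V E)
    (htwo : ∀ e : E, ∃ i j : C, i ≠ j ∧ M.EC e = {i, j} ∧ M.n e i = - M.n e j)
    (u : E → ℝ) : ∑ i, M.Ac i * M.dvg u i = 0 := by
  unfold StagMesh.dvg
  have L : ∑ i, M.Ac i * ((1 / M.Ac i) * ∑ e ∈ Finset.univ.filter (fun e => i ∈ M.EC e),
        M.l e * M.n e i * u e)
      = ∑ i, ∑ e ∈ Finset.univ.filter (fun e => i ∈ M.EC e), M.l e * M.n e i * u e := by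
    refine Finset.sum_congr rfl fun i _ => ?_
    have hA := (M.Ac_pos i).ne'
    field_simp
  rw [L, ← sum_swapC M]
  refine Finset.sum_eq_zero fun e _ => ?_
  obtain ⟨i, j, hij, hEC, hn⟩ := htwo e
  rw [hEC, Finset.sum_pair hij, hn]
  ring

lemma innerE_add_left (M : StagMesh C V E) (u v w : E → ℝ) :
    M.innerE (u + v) w = M.innerE u w + M.innerE v w := by
  simp only [StagMesh.innerE, Pi.add_apply, mul_add, add_mul, Finset.sum_add_distrib]

lemma innerE_neg_left (M : StagMesh C V E) (u w : E → ℝ) :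
    M.innerE (-u) w = - M.innerE u w := by
  simp only [StagMesh.innerE, Pi.neg_apply, mul_neg, neg_mul, Finset.sum_neg_distrib]

end CurlDivAux

open CurlDivAux

/-- well-posedness of the discrete curl–divergence problem: under
the standing mesh hypotheses, for every dual scalar field `ω` and every primary
scalar field `δ` with `Σ A_i δ_i = 0` there is a unique discrete vector field
`u` with `∇̃_h×u = ω` and `∇_h·u = δ`. -/
theorem curl_div_wellposed
    {C V E : Type} [Fintype C] [Fintype V] [Fintype E]
    [DecidableEq C] [DecidableEq V]
    (M : StagMesh C V E)
    (hsc : M.SgnCancel)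
    (heuler : Fintype.card C + Fintype.card V = Fintype.card E + 1)
    (hks : ∀ ψ : V → ℝ, M.skewGrad ψ = 0 → ψ = 0)
    (hkg : ∀ φ : C → ℝ, M.grad φ = 0 → ∀ i j : C, φ i = φ j)
    (htwo : ∀ e : E, ∃ i j : C, i ≠ j ∧ M.EC e = {i, j} ∧ M.n e i = - M.n e j)
    (ω : V → ℝ) (δ : C → ℝ) (hδ : (∑ i, M.Ac i * δ i) = 0) :
    ∃! u : E → ℝ, M.curl u = ω ∧ M.dvg u = δ := by
  classical
  -- the "potentials" map S(φ, ψ) = ∇φ + ∇̃⊥ψ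
  set Sm : ((C → ℝ) × (V → ℝ)) →ₗ[ℝ] (E → ℝ) :=
    (gradL M).comp (LinearMap.fst ℝ _ _) + (skewL M).comp (LinearMap.snd ℝ _ _) with hSm
  have hSapp : ∀ p : (C → ℝ) × (V → ℝ), Sm p = M.grad p.1 + M.skewGrad p.2 :=
    fun p => rfl
  -- C is nonempty
  have hskinj : Function.Injective (skewL M) := by
    rw [← LinearMap.ker_eq_bot]
    exact LinearMap.ker_eq_bot'.mpr fun ψ h => hks ψ h
  have hVE : Fintype.card V ≤ Fintype.card E := by
    have := LinearMap.finrank_le_finrank_of_injective hskinj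
    rwa [Module.finrank_fintype_fun_eq_card, Module.finrank_fintype_fun_eq_card] at this
  have hCpos : 0 < Fintype.card C := by omega
  have hCne : Nonempty C := Fintype.card_pos_iff.mp hCpos
  obtain ⟨i0⟩ := hCne
  -- the kernel of S consists of (constant, 0) pairs
  have hkerS : ∀ p : (C → ℝ) × (V → ℝ), Sm p = 0 → M.grad p.1 = 0 ∧ p.2 = 0 := by
    intro p hp
    rw [hSapp] at hp
    have hgs : M.grad p.1 = -(M.skewGrad p.2) := by
      rw [eq_neg_iff_add_eq_zero]
      exact hp
    have horth : M.innerE (M.skewGrad p.2) (M.grad p.1) = 0 := by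
      rw [innerE_skew, curl_grad M hsc p.1]
      simp [StagMesh.innerV]
    have hg0 : M.grad p.1 = 0 := by
      apply innerE_self_eq_zero M
      nth_rewrite 1 [hgs]
      rw [innerE_neg_left, horth, neg_zero]
    have hs0 : M.skewGrad p.2 = 0 := by
      rw [hgs] at hg0
      simpa using hg0
    exact ⟨hg0, hks p.2 hs0⟩
  set p0 : (C → ℝ) × (V → ℝ) := ((fun _ => (1:ℝ)), 0) with hp0
  have hp0mem : p0 ∈ LinearMap.ker Sm := by
    rw [LinearMap.mem_ker, hSapp]
    have h1 : M.grad (fun _ => (1:ℝ)) = 0 := grad_const M htwo 1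
    have h2 : M.skewGrad 0 = 0 := by
      funext e
      simp [StagMesh.skewGrad]
    simp [hp0, h1, h2]
  have hp0ne : p0 ≠ 0 := by
    intro h
    have := congrFun (congrArg Prod.fst h) i0
    simp [hp0] at this
  have hkerEq : LinearMap.ker Sm = Submodule.span ℝ {p0} := by
    apply le_antisymm
    · intro p hp
      obtain ⟨hg0, hψ0⟩ := hkerS p (LinearMap.mem_ker.mp hp)
      rw [Submodule.mem_span_singleton]
      refine ⟨p.1 i0, ?_⟩
      have : p = (p.1, p.2) := rfl
      rw [this, hp0]
      apply Prod.ext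
      · funext j
        have := hkg p.1 hg0 j i0
        simp [this]
      · simp [hψ0]
    · rw [Submodule.span_singleton_le_iff_mem]
      exact hp0mem
  -- dimension count: S is surjective
  have hfinD : Module.finrank ℝ ((C → ℝ) × (V → ℝ))
      = Fintype.card C + Fintype.card V := by
    rw [Module.finrank_prod, Module.finrank_fintype_fun_eq_card,
      Module.finrank_fintype_fun_eq_card]
  have hfinker : Module.finrank ℝ (LinearMap.ker Sm) = 1 := by
    rw [hkerEq]
    exact finrank_span_singleton hp0ne
  have hrn := LinearMap.finrank_range_add_finrank_ker Sm
  rw [hfinD, hfinker] at hrn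
  have hrange : Module.finrank ℝ (LinearMap.range Sm) = Fintype.card E := by omega
  have hStop : LinearMap.range Sm = ⊤ := by
    apply Submodule.eq_top_of_finrank_eq
    rw [hrange, Module.finrank_fintype_fun_eq_card]
  have hSsurj : Function.Surjective Sm := LinearMap.range_eq_top.mp hStop
  -- T = (curl, dvg) is injective
  set Tm : (E → ℝ) →ₗ[ℝ] ((V → ℝ) × (C → ℝ)) := (curlL M).prod (dvgL M) with hTm
  have hTapp : ∀ u : E → ℝ, Tm u = (M.curl u, M.dvg u) := fun u => rfl
  have hTinj : Function.Injective Tm := by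
    rw [← LinearMap.ker_eq_bot]
    apply LinearMap.ker_eq_bot'.mpr
    intro u hu
    rw [hTapp] at hu
    have hc : M.curl u = 0 := congrArg Prod.fst hu
    have hd : M.dvg u = 0 := congrArg Prod.snd hu
    obtain ⟨p, hp⟩ := hSsurj u
    apply innerE_self_eq_zero M
    nth_rewrite 1 [← hp, hSapp]
    rw [innerE_add_left, innerE_grad, innerE_skew, hc, hd]
    simp [StagMesh.innerC, StagMesh.innerV]
  -- the constraint functional L
  set Lf : ((V → ℝ) × (C → ℝ)) →ₗ[ℝ] ℝ :=
    { toFun := fun p => ∑ i, M.Ac i * p.2 i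
      map_add' := by
        intro p q
        simp only [Prod.snd_add, Pi.add_apply, mul_add, Finset.sum_add_distrib]
      map_smul' := by
        intro c p
        simp only [Prod.smul_snd, Pi.smul_apply, smul_eq_mul, RingHom.id_apply,
          Finset.mul_sum]
        exact Finset.sum_congr rfl fun i _ => by ring } with hLf
  have hLapp : ∀ p : (V → ℝ) × (C → ℝ), Lf p = ∑ i, M.Ac i * p.2 i := fun p => rfl
  have hLsurj : Function.Surjective Lf := by
    intro r
    refine ⟨(0, fun j => if j = i0 then r / M.Ac i0 else 0), ?_⟩
    rw [hLapp]
    simp only [mul_ite, mul_zero]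
    rw [Finset.sum_ite_eq' Finset.univ i0]
    have := (M.Ac_pos i0).ne'
    simp only [Finset.mem_univ, if_true]
    field_simp
  have hfinW : Module.finrank ℝ (LinearMap.ker Lf) = Fintype.card E := by
    have hrn2 := LinearMap.finrank_range_add_finrank_ker Lf
    have : LinearMap.range Lf = ⊤ := LinearMap.range_eq_top.mpr hLsurj
    rw [this] at hrn2
    rw [finrank_top, Module.finrank_self, Module.finrank_prod,
      Module.finrank_fintype_fun_eq_card, Module.finrank_fintype_fun_eq_card] at hrn2
    omega
  -- T maps into ker L
  have hTW : ∀ u : E → ℝ, Tm u ∈ LinearMap.ker Lf := by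
    intro u
    rw [LinearMap.mem_ker, hLapp, hTapp]
    exact sum_dvg M htwo u
  set T' : (E → ℝ) →ₗ[ℝ] (LinearMap.ker Lf) := Tm.codRestrict (LinearMap.ker Lf) hTW
    with hT'
  have hT'inj : Function.Injective T' := by
    rw [← LinearMap.ker_eq_bot, LinearMap.ker_codRestrict, LinearMap.ker_eq_bot]
    exact hTinj
  have hT'surj : Function.Surjective T' := by
    have hfe : Module.finrank ℝ (E → ℝ) = Module.finrank ℝ (LinearMap.ker Lf) := by
      rw [Module.finrank_fintype_fun_eq_card, hfinW]
    exact (LinearMap.injective_iff_surjective_of_finrank_eq_finrank hfe).mp hT'inj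
  -- conclude
  have hmem : (ω, δ) ∈ LinearMap.ker Lf := by
    rw [LinearMap.mem_ker, hLapp]
    exact hδ
  obtain ⟨u, hu⟩ := hT'surj ⟨(ω, δ), hmem⟩
  have hTu : Tm u = (ω, δ) := congrArg Subtype.val hu
  rw [hTapp] at hTu
  refine ⟨u, ⟨congrArg Prod.fst hTu, congrArg Prod.snd hTu⟩, ?_⟩
  intro v ⟨hv1, hv2⟩
  apply hTinj
  rw [hTapp, hTapp, hv1, hv2, Prod.mk.injEq]
  exact ⟨(congrArg Prod.fst hTu).symm, (congrArg Prod.snd hTu).symm⟩
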